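/- Let H be a graph, e an edge of H, G a two-terminal graph, and p ∈ ℂ with R(G;p) ≠ 0. Then ((1-p)/R(G;p))·R(H(G)_e; p) = R(H;p) + (y_G(p) − (p+1))·R(H∖e;p), where y_G(p) = (1-p)S(G;p)/R(G;p) + 1. -/

import Mathlib

open scoped Classical

/-- A (multi)graph: a vertex type, a finite edge type, and an endpoint map
sending each edge to an unordered pair of vertices. -/
structure Multigraph where
  V : Type
  E : Type
  [fintE : Fintype E]
  ends : E → Sym2 V

attribute [instance] Multigraph.fintE

namespace Multigraph

/-- The simple graph on the vertices of `G` induced by a set `A` of edges: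
two distinct vertices are adjacent if some edge of `A` joins them. -/
def graphOf (G : Multigraph) (A : Finset G.E) : SimpleGraph G.V where
  Adj u v := u ≠ v ∧ ∃ e ∈ A, G.ends e = s(u, v)
  symm := by
    constructor
    rintro u v ⟨h, e, he, hev⟩
    exact ⟨h.symm, e, he, by rw [hev, Sym2.eq_swap]⟩
  loopless := by constructor; rintro v ⟨h, -⟩; exact h rfl

/-- The (all-terminal) reliability polynomial of `G`, evaluated at the edge
failure probability `p`. -/
noncomputable def rel (G : Multigraph) (p : ℂ) : ℂ :=
  ∑ A : Finset G.E,
    if (G.graphOf A).Connected then (1 - p) ^ A.card * p ^ (Fintype.card G.E - A.card) else 0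

end Multigraph

/-- A two-terminal graph: a multigraph together with two distinct distinguished
vertices, the source `s` and the sink `t`. -/
structure TTGraph extends Multigraph where
  s : V
  t : V
  hst : s ≠ t

namespace TTGraph

/-- The reliability polynomial of a two-terminal graph. -/
noncomputable def rel (G : TTGraph) (p : ℂ) : ℂ := G.toMultigraph.rel p

/-- `A` is an `s`–`t` split: every vertex is joined by a path (within `A`) to
exactly one of `s`, `t`. -/
def IsSplit (G : TTGraph) (A : Finset G.toMultigraph.E) : Prop :=
  ∀ v : G.V, Xor' ((G.toMultigraph.graphOf A).Reachable v G.s)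
    ((G.toMultigraph.graphOf A).Reachable v G.t)

/-- The split reliability polynomial of a two-terminal graph. -/
noncomputable def split (G : TTGraph) (p : ℂ) : ℂ :=
  ∑ A : Finset G.toMultigraph.E,
    if G.IsSplit A then (1 - p) ^ A.card * p ^ (Fintype.card G.toMultigraph.E - A.card) else 0

/-- The effective edge interaction `y_G(p)`. -/
noncomputable def yEff (G : TTGraph) (p : ℂ) : ℂ := (1 - p) * G.split p / G.rel p + 1

/-- The virtual edge interaction `ŷ_G(p)`. -/
noncomputable def yVirt (G : TTGraph) (p : ℂ) : ℂ := G.rel p / G.split p + 1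

/-- The identifications made in the parallel composition: the two sources are
identified and the two sinks are identified. -/
def parRel (G₁ G₂ : TTGraph) : (G₁.V ⊕ G₂.V) → (G₁.V ⊕ G₂.V) → Prop :=
  fun a b => (a = .inl G₁.s ∧ b = .inr G₂.s) ∨ (a = .inl G₁.t ∧ b = .inr G₂.t)

/-- The parallel composition `G₁ ∥ G₂` of two two-terminal graphs. -/
noncomputable def par (G₁ G₂ : TTGraph) : TTGraph where
  V := Quot (parRel G₁ G₂)
  E := G₁.toMultigraph.E ⊕ G₂.toMultigraph.E
  ends := Sum.elim (fun e => (G₁.ends e).map (Quot.mk _ ∘ Sum.inl))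
    (fun e => (G₂.ends e).map (Quot.mk _ ∘ Sum.inr))
  s := Quot.mk _ (.inl G₁.s)
  t := Quot.mk _ (.inl G₁.t)
  hst := by
    intro h
    have hresp : ∀ a b, parRel G₁ G₂ a b →
        (Sum.elim (fun v => v = G₁.t) (fun v => v = G₂.t) a : Prop) =
        (Sum.elim (fun v => v = G₁.t) (fun v => v = G₂.t) b : Prop) := by
      rintro a b (⟨rfl, rfl⟩ | ⟨rfl, rfl⟩) <;> simp [G₁.hst, G₂.hst]
    have := congrArg (Quot.lift _ hresp) h
    simp [G₁.hst] at this

/-- The identification made in the series composition: the sink of `G₁` is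
identified with the source of `G₂`. -/
def serRel (G₁ G₂ : TTGraph) : (G₁.V ⊕ G₂.V) → (G₁.V ⊕ G₂.V) → Prop :=
  fun a b => a = .inl G₁.t ∧ b = .inr G₂.s

/-- The series composition `G₁ ⋈ G₂` of two two-terminal graphs. -/
noncomputable def ser (G₁ G₂ : TTGraph) : TTGraph where
  V := Quot (serRel G₁ G₂)
  E := G₁.toMultigraph.E ⊕ G₂.toMultigraph.E
  ends := Sum.elim (fun e => (G₁.ends e).map (Quot.mk _ ∘ Sum.inl))
    (fun e => (G₂.ends e).map (Quot.mk _ ∘ Sum.inr))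
  s := Quot.mk _ (.inl G₁.s)
  t := Quot.mk _ (.inr G₂.t)
  hst := by
    intro h
    have hresp : ∀ a b, serRel G₁ G₂ a b →
        (Sum.elim (fun v => v = G₁.t) (fun _ => True) a : Prop) =
        (Sum.elim (fun v => v = G₁.t) (fun _ => True) b : Prop) := by
      rintro a b ⟨rfl, rfl⟩; simp
    have := congrArg (Quot.lift _ hresp) h
    simp [G₁.hst] at this

end TTGraph

namespace Multigraph

/-- Deletion of an edge. -/
noncomputable def delete (G : Multigraph) (e : G.E) : Multigraph where
  V := G.V
  E := {e' : G.E // e' ≠ e}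
  ends := fun e' => G.ends e'.1

/-- Contraction of an edge: its two endpoints are identified, and the edge is removed. -/
noncomputable def contract (G : Multigraph) (e : G.E) : Multigraph where
  V := Quot (fun a b => G.ends e = s(a, b))
  E := {e' : G.E // e' ≠ e}
  ends := fun e' => (G.ends e'.1).map (Quot.mk _)

end Multigraph

/-- The identifications for gluing a two-terminal graph `G` in place of an edge with
endpoints `u`, `v`: the source of `G` is identified with `u`, the sink with `v`. -/
def substRel (H : Multigraph) (u v : H.V) (G : TTGraph) :
    (H.V ⊕ G.V) → (H.V ⊕ G.V) → Prop :=
  fun a b => (a = .inl u ∧ b = .inr G.s) ∨ (a = .inl v ∧ b = .inr G.t)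

/-- The graph `H(G)_e` obtained from `H` by deleting the edge `e` (with endpoints
`u`, `v`) and gluing in a copy of `G`, identifying the source of `G` with `u`
and the sink of `G` with `v`. -/
noncomputable def Multigraph.substEdge (H : Multigraph) (e : H.E) (u v : H.V) (G : TTGraph) :
    Multigraph where
  V := Quot (substRel H u v G)
  E := {e' : H.E // e' ≠ e} ⊕ G.toMultigraph.E
  ends := Sum.elim (fun e' => (H.ends e'.1).map (Quot.mk _ ∘ Sum.inl))
    (fun f => (G.ends f).map (Quot.mk _ ∘ Sum.inr))

open scoped Classical
open Relation

section Machinery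
variable {α β : Type*}

theorem eqvGen_map {r : α → α → Prop} {r' : β → β → Prop} (f : α → β)
    (h : ∀ x y, r x y → EqvGen r' (f x) (f y)) {x y : α} (hxy : EqvGen r x y) :
    EqvGen r' (f x) (f y) := by
  induction hxy with
  | rel a b hab => exact h a b hab
  | refl a => exact EqvGen.refl _
  | symm a b _ ih => exact EqvGen.symm _ _ ih
  | trans a b c _ _ ih1 ih2 => exact EqvGen.trans _ _ _ ih1 ih2

theorem eqvGen_congr {r r' : α → α → Prop} (h : ∀ x y, r x y ↔ r' x y) {x y : α} :
    EqvGen r x y ↔ EqvGen r' x y :=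
  ⟨EqvGen.mono (fun a b => (h a b).1) x y, EqvGen.mono (fun a b => (h a b).2) x y⟩

theorem eqvGen_transfer {r : α → α → Prop} {r' : β → β → Prop} (f : α → β)
    (hf : Function.Surjective f)
    (h1 : ∀ x y, r x y → EqvGen r' (f x) (f y))
    (h2 : ∀ a b, r' a b → ∃ x y, f x = a ∧ f y = b ∧ EqvGen r x y)
    (h3 : ∀ x y, f x = f y → EqvGen r x y) :
    (∀ x y, EqvGen r x y) ↔ (∀ a b, EqvGen r' a b) := by
  constructor
  · intro H a b
    obtain ⟨x, rfl⟩ := hf a; obtain ⟨y, rfl⟩ := hf b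
    exact eqvGen_map f h1 (H x y)
  · intro H x y
    have key : ∀ a b, EqvGen r' a b → ∀ x y, f x = a → f y = b → EqvGen r x y := by
      intro a b hab
      induction hab with
      | rel a b h =>
        rintro x y rfl rfl
        obtain ⟨x', y', hx, hy, hxy⟩ := h2 _ _ h
        exact ((h3 x x' hx.symm).trans _ _ _ hxy).trans _ _ _ (h3 y' y hy)
      | refl a => intro x y hx hy; exact h3 x y (hx.trans hy.symm)
      | symm a b _ ih => intro x y hx hy; exact EqvGen.symm _ _ (ih y x hy hx)
      | trans a b c _ _ ih1 ih2 =>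
        intro x y hx hy
        obtain ⟨z, hz⟩ := hf b
        exact (ih1 x z hx hz).trans _ _ _ (ih2 z y hz hy)
    exact key _ _ (H (f x) (f y)) x y rfl rfl

theorem sym2_exists_rep (z : Sym2 α) : ∃ x y : α, z = s(x, y) := by
  induction z using Sym2.ind with
  | _ x y => exact ⟨x, y, rfl⟩

def finsetSumEquiv {γ δ : Type*} : Finset (γ ⊕ δ) ≃ Finset γ × Finset δ where
  toFun A := (A.toLeft, A.toRight)
  invFun P := P.1.disjSum P.2
  left_inv A := A.toLeft_disjSum_toRight
  right_inv P := by simp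

theorem sum_finset_sum_type {γ δ M : Type*} [Fintype γ] [Fintype δ] [AddCommMonoid M]
    (f : Finset (γ ⊕ δ) → M) :
    ∑ A, f A = ∑ B : Finset γ, ∑ C : Finset δ, f (B.disjSum C) := by
  rw [← Fintype.sum_prod_type (fun P : Finset γ × Finset δ => f (P.1.disjSum P.2))]
  exact (Fintype.sum_equiv finsetSumEquiv.symm _ _ (fun P => rfl)).symm

theorem ite_or_split {M : Type*} [AddZeroClass M] {P Q : Prop} (h : ¬(P ∧ Q)) (m : M) :
    (if P ∨ Q then m else 0) = (if P then m else 0) + (if Q then m else 0) := by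
  by_cases hP : P <;> by_cases hQ : Q <;> simp_all

theorem ite_and_mul {M : Type*} [MulZeroClass M] {P Q : Prop} (a b : M) :
    (if P ∧ Q then a * b else 0) = (if P then a else 0) * (if Q then b else 0) := by
  by_cases hP : P <;> by_cases hQ : Q <;> simp_all

end Machinery
section Key
open Relation
variable {α β : Type*}

/-- disjoint union of two relations -/
def rSum (rH : α → α → Prop) (rG : β → β → Prop) : (α ⊕ β) → (α ⊕ β) → Prop :=
  fun a b => match a, b with
  | .inl x, .inl y => rH x y
  | .inr x, .inr y => rG x y
  | _, _ => False

def pairRel (u v : α) : α → α → Prop := fun x y => (x = u ∧ y = v) ∨ (x = v ∧ y = u)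

variable {rH : α → α → Prop} {rG : β → β → Prop} {u v : α} {s t : β}

theorem key_lemma :
    (∀ a b : α ⊕ β,
      EqvGen (fun a b => ((a = Sum.inl u ∧ b = Sum.inr s) ∨ (a = Sum.inl v ∧ b = Sum.inr t))
        ∨ rSum rH rG a b) a b)
      ↔ ((∀ w, Xor' (EqvGen rG w s) (EqvGen rG w t)) ∧ (∀ x y, EqvGen rH x y))
        ∨ ((∀ w z, EqvGen rG w z)
            ∧ (∀ x y, EqvGen (fun x y => rH x y ∨ pairRel u v x y) x y)) := by
  set R : (α ⊕ β) → (α ⊕ β) → Prop :=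
    fun a b => ((a = Sum.inl u ∧ b = Sum.inr s) ∨ (a = Sum.inl v ∧ b = Sum.inr t))
        ∨ rSum rH rG a b with hR
  have liftH : ∀ x y : α, EqvGen rH x y → EqvGen R (.inl x) (.inl y) := fun x y h =>
    eqvGen_map Sum.inl (fun a b hab => EqvGen.rel _ _ (Or.inr hab)) h
  have liftG : ∀ x y : β, EqvGen rG x y → EqvGen R (.inr x) (.inr y) := fun x y h =>
    eqvGen_map Sum.inr (fun a b hab => EqvGen.rel _ _ (Or.inr hab)) h
  have glue1 : EqvGen R (.inl u) (.inr s) := EqvGen.rel _ _ (Or.inl (Or.inl ⟨rfl, rfl⟩))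
  have glue2 : EqvGen R (.inl v) (.inr t) := EqvGen.rel _ _ (Or.inl (Or.inr ⟨rfl, rfl⟩))
  constructor
  · intro hP
    -- Step 1: every w : β reaches s or t
    have hS : ∀ w : β, EqvGen rG w s ∨ EqvGen rG w t := by
      intro w
      set C : α ⊕ β → Prop := fun a => match a with
        | .inl _ => True
        | .inr z => EqvGen rG z s ∨ EqvGen rG z t with hC
      set Q : (α ⊕ β) → (α ⊕ β) → Prop := fun a b =>
        (C a ∧ C b) ∨ (∃ w' z', a = .inr w' ∧ b = .inr z' ∧ EqvGen rG w' z') with hQ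
      have hCtrans : ∀ w' z', EqvGen rG w' z' → (C (.inr w') ↔ C (.inr z')) := by
        intro w' z' h
        simp only [hC]
        constructor
        · rintro (h1 | h1)
          · exact Or.inl ((EqvGen.symm _ _ h).trans _ _ _ h1)
          · exact Or.inr ((EqvGen.symm _ _ h).trans _ _ _ h1)
        · rintro (h1 | h1)
          · exact Or.inl (h.trans _ _ _ h1)
          · exact Or.inr (h.trans _ _ _ h1)
      have hQall : ∀ a b, EqvGen R a b → Q a b := by
        intro a b hab
        induction hab with
        | rel a b h =>
          rcases h with (⟨rfl, rfl⟩ | ⟨rfl, rfl⟩) | h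
          · exact Or.inl ⟨trivial, Or.inl (EqvGen.refl _)⟩
          · exact Or.inl ⟨trivial, Or.inr (EqvGen.refl _)⟩
          · match a, b, h with
            | .inl x, .inl y, h => exact Or.inl ⟨trivial, trivial⟩
            | .inr x, .inr y, h => exact Or.inr ⟨x, y, rfl, rfl, EqvGen.rel _ _ h⟩
        | refl a =>
          match a with
          | .inl x => exact Or.inl ⟨trivial, trivial⟩
          | .inr w' => exact Or.inr ⟨w', w', rfl, rfl, EqvGen.refl _⟩
        | symm a b _ ih =>
          rcases ih with ⟨h1, h2⟩ | ⟨w', z', rfl, rfl, h⟩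
          · exact Or.inl ⟨h2, h1⟩
          · exact Or.inr ⟨z', w', rfl, rfl, EqvGen.symm _ _ h⟩
        | trans a b c _ _ ih1 ih2 =>
          rcases ih1 with ⟨h1, h2⟩ | ⟨w', z', rfl, rfl, h⟩
          · rcases ih2 with ⟨h3, h4⟩ | ⟨w'', z'', rfl, rfl, h'⟩
            · exact Or.inl ⟨h1, h4⟩
            · exact Or.inl ⟨h1, (hCtrans _ _ h').mp h2⟩
          · rcases ih2 with ⟨h3, h4⟩ | ⟨w'', z'', heq, rfl, h'⟩
            · exact Or.inl ⟨(hCtrans _ _ h).mpr h3, h4⟩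
            · rcases Sum.inr.inj heq with rfl
              exact Or.inr ⟨w', z'', rfl, rfl, h.trans _ _ _ h'⟩
      have := hQall _ _ (hP (.inr w) (.inl u))
      rcases this with ⟨h1, _⟩ | ⟨w', z', _, heq, _⟩
      · exact h1
      · exact absurd heq (by simp)
    by_cases hst' : EqvGen rG s t
    · -- fully connected case
      refine Or.inr ⟨?_, ?_⟩
      · have ws : ∀ w, EqvGen rG w s := by
          intro w
          rcases hS w with h | h
          · exact h
          · exact h.trans _ _ _ (EqvGen.symm _ _ hst')
        exact fun w z => (ws w).trans _ _ _ (EqvGen.symm _ _ (ws z))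
      · intro x y
        have step : ∀ a b : α ⊕ β, R a b →
            EqvGen (fun x y => rH x y ∨ pairRel u v x y)
              (Sum.elim id (fun _ => u) a) (Sum.elim id (fun _ => u) b) := by
          rintro a b ((⟨rfl, rfl⟩ | ⟨rfl, rfl⟩) | h)
          · exact EqvGen.refl _
          · exact EqvGen.rel _ _ (Or.inr (Or.inr ⟨rfl, rfl⟩))
          · match a, b, h with
            | .inl x, .inl y, h => exact EqvGen.rel _ _ (Or.inl h)
            | .inr x, .inr y, h => exact EqvGen.refl _
        exact eqvGen_map _ step (hP (.inl x) (.inl y))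
    · -- split case
      refine Or.inl ⟨?_, ?_⟩
      · intro w
        rcases hS w with h | h
        · exact Or.inl ⟨h, fun h' => hst' ((EqvGen.symm _ _ h).trans _ _ _ h')⟩
        · exact Or.inr ⟨h, fun h' => hst' ((EqvGen.symm _ _ h').trans _ _ _ h)⟩
      · intro x y
        set π : α ⊕ β → α := Sum.elim id (fun w => if EqvGen rG w t then v else u) with hπ
        have step : ∀ a b : α ⊕ β, R a b → EqvGen rH (π a) (π b) := by
          rintro a b ((⟨rfl, rfl⟩ | ⟨rfl, rfl⟩) | h)
          · simp only [hπ, Sum.elim_inl, Sum.elim_inr, id, if_neg hst']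
            exact EqvGen.refl _
          · simp only [hπ, Sum.elim_inl, Sum.elim_inr, id, if_pos (EqvGen.refl t)]
            exact EqvGen.refl _
          · match a, b, h with
            | .inl x, .inl y, h => exact EqvGen.rel _ _ h
            | .inr x, .inr y, h =>
              have hxy : EqvGen rG x y := EqvGen.rel _ _ h
              have : (EqvGen rG x t) = (EqvGen rG y t) :=
                propext ⟨fun h' => (EqvGen.symm _ _ hxy).trans _ _ _ h',
                  fun h' => hxy.trans _ _ _ h'⟩
              simp only [hπ, Sum.elim_inr, this]
              exact EqvGen.refl _
        exact eqvGen_map _ step (hP (.inl x) (.inl y))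
  · rintro (⟨hsplit, hD⟩ | ⟨hG, hC⟩) a b
    · have toU : ∀ a : α ⊕ β, EqvGen R a (.inl u) := by
        intro a
        match a with
        | .inl x => exact liftH _ _ (hD x u)
        | .inr w =>
          rcases hsplit w with ⟨h, _⟩ | ⟨h, _⟩
          · exact (liftG _ _ h).trans _ _ _ (EqvGen.symm _ _ glue1)
          · exact ((liftG _ _ h).trans _ _ _ (EqvGen.symm _ _ glue2)).trans _ _ _
              (liftH _ _ (hD v u))
      exact (toU a).trans _ _ _ (EqvGen.symm _ _ (toU b))
    · have huv : EqvGen R (.inl u) (.inl v) :=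
        (glue1.trans _ _ _ (liftG _ _ (hG s t))).trans _ _ _ (EqvGen.symm _ _ glue2)
      have liftH' : ∀ x y : α, EqvGen (fun x y => rH x y ∨ pairRel u v x y) x y →
          EqvGen R (.inl x) (.inl y) := by
        intro x y h
        refine eqvGen_map Sum.inl ?_ h
        rintro a b (h | (⟨rfl, rfl⟩ | ⟨rfl, rfl⟩))
        · exact EqvGen.rel _ _ (Or.inr h)
        · exact huv
        · exact EqvGen.symm _ _ huv
      have toU : ∀ a : α ⊕ β, EqvGen R a (.inl u) := by
        intro a
        match a with
        | .inl x => exact liftH' x u (hC x u)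
        | .inr w => exact (liftG _ _ (hG w s)).trans _ _ _ (EqvGen.symm _ _ glue1)
      exact (toU a).trans _ _ _ (EqvGen.symm _ _ (toU b))
end Key
section GraphLemmas
open Relation
namespace Multigraph

def erel (M : Multigraph) (A : Finset M.E) : M.V → M.V → Prop :=
  fun x y => ∃ e ∈ A, M.ends e = s(x, y)

theorem reachable_iff (M : Multigraph) (A : Finset M.E) (x y : M.V) :
    (M.graphOf A).Reachable x y ↔ EqvGen (M.erel A) x y := by
  constructor
  · intro h
    obtain ⟨w⟩ := h
    induction w with
    | nil => exact EqvGen.refl _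
    | cons h p ih => exact (EqvGen.rel _ _ h.2).trans _ _ _ ih
  · intro h
    induction h with
    | rel a b h =>
      by_cases hab : a = b
      · subst hab; exact SimpleGraph.Reachable.refl _
      · exact SimpleGraph.Adj.reachable ⟨hab, h⟩
    | refl a => exact SimpleGraph.Reachable.refl _
    | symm a b _ ih => exact ih.symm
    | trans a b c _ _ ih1 ih2 => exact ih1.trans ih2

theorem connected_iff' (M : Multigraph) (A : Finset M.E) :
    (M.graphOf A).Connected ↔ Nonempty M.V ∧ ∀ x y, EqvGen (M.erel A) x y := by
  rw [SimpleGraph.connected_iff, and_comm]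
  exact and_congr_right fun _ =>
    forall_congr' fun x => forall_congr' fun y => M.reachable_iff A x y

/-- the edge-subtype embedding -/
def emb (M : Multigraph) (e : M.E) : {e' : M.E // e' ≠ e} ↪ M.E :=
  ⟨Subtype.val, Subtype.val_injective⟩

theorem delete_graphOf (M : Multigraph) (e : M.E) (A : Finset {e' : M.E // e' ≠ e}) :
    (M.delete e).graphOf A = M.graphOf (A.map (M.emb e)) := by
  ext x y
  simp only [graphOf, delete, Finset.mem_map, emb]
  constructor
  · rintro ⟨hxy, e', he', h⟩
    exact ⟨hxy, e'.1, ⟨e', he', rfl⟩, h⟩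
  · rintro ⟨hxy, e', ⟨e'', he'', rfl⟩, h⟩
    exact ⟨hxy, e'', he'', h⟩

theorem nonempty_quot {α : Type*} (r : α → α → Prop) : Nonempty (Quot r) ↔ Nonempty α :=
  ⟨fun ⟨q⟩ => let ⟨x, _⟩ := Quot.exists_rep q; ⟨x⟩, fun ⟨x⟩ => ⟨Quot.mk r x⟩⟩

theorem contract_eqvGen_iff (M : Multigraph) (e : M.E) (B : Finset {e' : M.E // e' ≠ e}) :
    (∀ x y : M.V, EqvGen (M.erel (insert e (B.map (M.emb e)))) x y)
      ↔ (∀ a b : (M.contract e).V, EqvGen ((M.contract e).erel B) a b) := by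
  refine eqvGen_transfer (Quot.mk _ : M.V → (M.contract e).V)
    (fun a => Quot.exists_rep a) ?_ ?_ ?_
  · rintro x y ⟨e0, he0, h⟩
    rcases Finset.mem_insert.mp he0 with heq | hmem
    · rw [heq] at h
      have : (Quot.mk _ x : (M.contract e).V) = Quot.mk _ y := Quot.sound h
      rw [this]
      exact EqvGen.refl _
    · obtain ⟨e1, he1, rfl⟩ := Finset.mem_map.mp hmem
      refine EqvGen.rel _ _ ⟨e1, he1, ?_⟩
      show (M.ends e1.1).map (Quot.mk _) = _
      have h' : M.ends e1.1 = s(x, y) := h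
      rw [h', Sym2.map_pair_eq]
      rfl
  · rintro a b ⟨e1, he1, h⟩
    obtain ⟨x, y, hxy⟩ := sym2_exists_rep (M.ends e1.1)
    have hmap : s(Quot.mk _ x, Quot.mk _ y) = s(a, b) := by
      rw [← Sym2.map_pair_eq, ← hxy]; exact h
    have hstep : M.erel (insert e (B.map (M.emb e))) x y :=
      ⟨e1.1, Finset.mem_insert_of_mem (Finset.mem_map_of_mem _ he1), hxy⟩
    rcases Sym2.eq_iff.mp hmap with ⟨h1, h2⟩ | ⟨h1, h2⟩
    · exact ⟨x, y, h1, h2, EqvGen.rel _ _ hstep⟩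
    · exact ⟨y, x, h2, h1, EqvGen.symm _ _ (EqvGen.rel _ _ hstep)⟩
  · intro x y h
    exact EqvGen.mono (fun a b (hab : M.ends e = s(a, b)) =>
      (⟨e, Finset.mem_insert_self _ _, hab⟩ : M.erel (insert e (B.map (M.emb e))) a b)) _ _
      (Quot.eq.mp h)

theorem contract_connected_iff (M : Multigraph) (e : M.E) (B : Finset {e' : M.E // e' ≠ e}) :
    ((M.contract e).graphOf B).Connected ↔
      (M.graphOf (insert e (B.map (M.emb e)))).Connected := by
  rw [connected_iff' (M.contract e) B, connected_iff']
  exact and_congr (nonempty_quot _) (M.contract_eqvGen_iff e B).symm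

end Multigraph
end GraphLemmas
section DelCon
open Relation
namespace Multigraph
variable (M : Multigraph) (e : M.E)

noncomputable def edgeEquiv : ({e' : M.E // e' ≠ e} ⊕ Unit) ≃ M.E where
  toFun := Sum.elim Subtype.val (fun _ => e)
  invFun e' := if h : e' = e then .inr () else .inl ⟨e', h⟩
  left_inv a := by
    cases a with
    | inl a => simp [a.2]
    | inr a => simp
  right_inv e' := by by_cases h : e' = e <;> simp [h]

theorem map_disjSum_empty (B : Finset {e' : M.E // e' ≠ e}) :
    (B.disjSum (∅ : Finset Unit)).map (M.edgeEquiv e).toEmbedding = B.map (M.emb e) := by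
  ext x
  constructor
  · intro hx
    obtain ⟨a, ha, rfl⟩ := Finset.mem_map.mp hx
    match a with
    | .inl b => exact show ((M.emb e) b) ∈ _ from
        Finset.mem_map_of_mem _ (Finset.inl_mem_disjSum.mp ha)
    | .inr b => exact absurd (Finset.inr_mem_disjSum.mp ha) (Finset.notMem_empty _)
  · intro hx
    obtain ⟨b, hb, rfl⟩ := Finset.mem_map.mp hx
    exact Finset.mem_map.mpr ⟨.inl b, Finset.inl_mem_disjSum.mpr hb, rfl⟩

theorem map_disjSum_unit (B : Finset {e' : M.E // e' ≠ e}) :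
    (B.disjSum ({()} : Finset Unit)).map (M.edgeEquiv e).toEmbedding
      = insert e (B.map (M.emb e)) := by
  ext x
  constructor
  · intro hx
    obtain ⟨a, ha, rfl⟩ := Finset.mem_map.mp hx
    match a with
    | .inl b => exact show ((M.emb e) b) ∈ insert e (Finset.map (M.emb e) B) from
        Finset.mem_insert_of_mem (Finset.mem_map_of_mem _ (Finset.inl_mem_disjSum.mp ha))
    | .inr b => exact show e ∈ insert e (Finset.map (M.emb e) B) from
        Finset.mem_insert_self _ _
  · intro hx
    rcases Finset.mem_insert.mp hx with heq | hmem
    · exact Finset.mem_map.mpr ⟨.inr (),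
        Finset.inr_mem_disjSum.mpr (Finset.mem_singleton_self _), heq.symm⟩
    · obtain ⟨b, hb, rfl⟩ := Finset.mem_map.mp hmem
      exact Finset.mem_map.mpr ⟨.inl b, Finset.inl_mem_disjSum.mpr hb, rfl⟩

theorem not_mem_map_emb (B : Finset {e' : M.E // e' ≠ e}) : e ∉ B.map (M.emb e) := by
  simp only [Finset.mem_map, emb]
  rintro ⟨b, hb, hbe⟩
  exact b.2 hbe

theorem sum_finset_unit {N : Type*} [AddCommMonoid N] (f : Finset Unit → N) :
    ∑ C : Finset Unit, f C = f ∅ + f {()} := by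
  rw [show (Finset.univ : Finset (Finset Unit)) = {∅, {()}} from by decide]
  rw [Finset.sum_insert (by decide), Finset.sum_singleton]

theorem rel_delcon (p : ℂ) :
    M.rel p = p * (M.delete e).rel p + (1 - p) * (M.contract e).rel p := by
  classical
  set m := Fintype.card {e' : M.E // e' ≠ e} with hm
  have hn : Fintype.card M.E = m + 1 := by
    rw [← Fintype.card_congr (M.edgeEquiv e), Fintype.card_sum, Fintype.card_unit]
  have hmd : Fintype.card (M.delete e).E = m := Fintype.card_congr (Equiv.refl _)
  have hmc : Fintype.card (M.contract e).E = m := Fintype.card_congr (Equiv.refl _)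
  have hd' : (M.delete e).rel p = ∑ B : Finset {e' : M.E // e' ≠ e},
      (if ((M.delete e).graphOf B).Connected then
        (1 - p) ^ B.card * p ^ (m - B.card) else 0) :=
    Fintype.sum_equiv (Equiv.refl _) _ _ (fun B => by rw [hmd, Equiv.refl_apply]; rfl)
  have hc' : (M.contract e).rel p = ∑ B : Finset {e' : M.E // e' ≠ e},
      (if ((M.contract e).graphOf B).Connected then
        (1 - p) ^ B.card * p ^ (m - B.card) else 0) :=
    Fintype.sum_equiv (Equiv.refl _) _ _ (fun B => by rw [hmc, Equiv.refl_apply]; rfl)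
  rw [hd', hc']
  unfold rel
  have reindex : ∀ f : Finset M.E → ℂ,
      ∑ A : Finset M.E, f A
        = ∑ A : Finset ({e' : M.E // e' ≠ e} ⊕ Unit), f (A.map (M.edgeEquiv e).toEmbedding) :=
    fun f => (Fintype.sum_equiv (Equiv.finsetCongr (M.edgeEquiv e)) _ _
      (fun A => by rw [Equiv.finsetCongr_apply])).symm
  rw [reindex, sum_finset_sum_type, Finset.mul_sum, Finset.mul_sum, ← Finset.sum_add_distrib]
  refine Finset.sum_congr rfl fun B _ => ?_
  rw [sum_finset_unit, map_disjSum_empty, map_disjSum_unit]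
  have hBle : B.card ≤ m := hm ▸ Finset.card_le_univ B
  have h1 : (if (M.graphOf (B.map (M.emb e))).Connected then
        (1 - p) ^ (B.map (M.emb e)).card
          * p ^ (Fintype.card M.E - (B.map (M.emb e)).card) else 0)
      = p * (if ((M.delete e).graphOf B).Connected then
          (1 - p) ^ B.card * p ^ (m - B.card) else 0) := by
    have hdel : ((M.delete e).graphOf B).Connected ↔ (M.graphOf (B.map (M.emb e))).Connected :=
      Iff.of_eq (congrArg SimpleGraph.Connected (delete_graphOf M e B))
    rw [hdel, Finset.card_map, hn]
    by_cases h : (M.graphOf (B.map (M.emb e))).Connected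
    · rw [if_pos h, if_pos h, show m + 1 - B.card = (m - B.card) + 1 from by omega, pow_succ]
      ring
    · simp [h]
  have h2 : (if (M.graphOf (insert e (B.map (M.emb e)))).Connected then
        (1 - p) ^ (insert e (B.map (M.emb e))).card
          * p ^ (Fintype.card M.E - (insert e (B.map (M.emb e))).card) else 0)
      = (1 - p) * (if ((M.contract e).graphOf B).Connected then
          (1 - p) ^ B.card * p ^ (m - B.card) else 0) := by
    rw [Finset.card_insert_of_notMem (M.not_mem_map_emb e B), Finset.card_map, hn,
      contract_connected_iff]
    by_cases h : (M.graphOf (insert e (B.map (M.emb e)))).Connected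
    · rw [if_pos h, if_pos h, show m + 1 - (B.card + 1) = m - B.card from by omega, pow_succ]
      ring
    · simp [h]
  rw [h1, h2]

end Multigraph
end DelCon
section Splice
open Relation Multigraph

theorem substEdge_connected_iff (H : Multigraph) (e : H.E) (u v : H.V)
    (hends : H.ends e = s(u, v)) (G : TTGraph)
    (A₁ : Finset {e' : H.E // e' ≠ e}) (A₂ : Finset G.toMultigraph.E) :
    ((H.substEdge e u v G).graphOf (A₁.disjSum A₂)).Connected ↔
      (G.IsSplit A₂ ∧ ((H.delete e).graphOf A₁).Connected)
        ∨ ((G.toMultigraph.graphOf A₂).Connected ∧ ((H.contract e).graphOf A₁).Connected) := by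
  classical
  set rH : H.V → H.V → Prop := (H.delete e).erel A₁ with hrH
  set rG := G.toMultigraph.erel A₂ with hrG
  set R : (H.V ⊕ G.V) → (H.V ⊕ G.V) → Prop :=
    fun a b => ((a = Sum.inl u ∧ b = Sum.inr G.s) ∨ (a = Sum.inl v ∧ b = Sum.inr G.t))
      ∨ rSum rH rG a b with hR
  have transfer : (∀ x y : H.V ⊕ G.V, EqvGen R x y)
      ↔ ∀ a b : (H.substEdge e u v G).V,
          EqvGen ((H.substEdge e u v G).erel (A₁.disjSum A₂)) a b := by
    refine eqvGen_transfer (Quot.mk _ : (H.V ⊕ G.V) → (H.substEdge e u v G).V)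
      (fun a => Quot.exists_rep a) ?_ ?_ ?_
    · rintro x y (h | h)
      · have : (Quot.mk _ x : (H.substEdge e u v G).V) = Quot.mk _ y := Quot.sound h
        rw [this]; exact EqvGen.refl _
      · match x, y, h with
        | .inl x, .inl y, h =>
          obtain ⟨e1, he1, hh⟩ := h
          refine EqvGen.rel _ _ ⟨.inl e1, Finset.inl_mem_disjSum.mpr he1, ?_⟩
          show Sym2.map _ (H.ends e1.1) = _
          have hh' : H.ends e1.1 = s(x, y) := hh
          rw [hh', Sym2.map_pair_eq]; rfl
        | .inr x, .inr y, h =>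
          obtain ⟨e1, he1, hh⟩ := h
          refine EqvGen.rel _ _ ⟨.inr e1, Finset.inr_mem_disjSum.mpr he1, ?_⟩
          show Sym2.map _ (G.ends e1) = _
          rw [hh, Sym2.map_pair_eq]; rfl
    · rintro a b ⟨ε, hε, h⟩
      match ε, h with
      | .inl e1, h =>
        have hmem : e1 ∈ A₁ := Finset.inl_mem_disjSum.mp hε
        obtain ⟨x, y, hxy⟩ := sym2_exists_rep (H.ends e1.1)
        have hmap : s((Quot.mk _ (Sum.inl x) : (H.substEdge e u v G).V),
            Quot.mk _ (Sum.inl y)) = s(a, b) := by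
          rw [← h]
          show _ = Sym2.map _ (H.ends e1.1)
          rw [hxy, Sym2.map_pair_eq]; rfl
        have hstep : R (.inl x) (.inl y) :=
          Or.inr (show rSum rH rG (Sum.inl x) (Sum.inl y) from ⟨e1, hmem, hxy⟩)
        rcases Sym2.eq_iff.mp hmap with ⟨h1, h2⟩ | ⟨h1, h2⟩
        · exact ⟨_, _, h1, h2, EqvGen.rel _ _ hstep⟩
        · exact ⟨_, _, h2, h1, EqvGen.symm _ _ (EqvGen.rel _ _ hstep)⟩
      | .inr f1, h =>
        have hmem : f1 ∈ A₂ := Finset.inr_mem_disjSum.mp hε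
        obtain ⟨x, y, hxy⟩ := sym2_exists_rep (G.ends f1)
        have hmap : s((Quot.mk _ (Sum.inr x) : (H.substEdge e u v G).V),
            Quot.mk _ (Sum.inr y)) = s(a, b) := by
          rw [← h]
          show _ = Sym2.map _ (G.ends f1)
          rw [hxy, Sym2.map_pair_eq]; rfl
        have hstep : R (.inr x) (.inr y) :=
          Or.inr (show rSum rH rG (Sum.inr x) (Sum.inr y) from ⟨f1, hmem, hxy⟩)
        rcases Sym2.eq_iff.mp hmap with ⟨h1, h2⟩ | ⟨h1, h2⟩
        · exact ⟨_, _, h1, h2, EqvGen.rel _ _ hstep⟩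
        · exact ⟨_, _, h2, h1, EqvGen.symm _ _ (EqvGen.rel _ _ hstep)⟩
    · intro x y h
      exact EqvGen.mono (fun a b (hab : substRel H u v G a b) => (Or.inl hab : R a b)) _ _
        (Quot.eq.mp h)
  rw [connected_iff' (H.substEdge e u v G) (A₁.disjSum A₂)]
  rw [and_iff_right (⟨Quot.mk _ (Sum.inl u)⟩ : Nonempty (H.substEdge e u v G).V)]
  rw [← transfer, key_lemma]
  have c1 : (∀ w, Xor' (EqvGen rG w G.s) (EqvGen rG w G.t)) ↔ G.IsSplit A₂ := by
    unfold TTGraph.IsSplit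
    refine forall_congr' fun w => ?_
    rw [show ((G.toMultigraph.graphOf A₂).Reachable w G.s) = EqvGen rG w G.s from
          propext (reachable_iff _ _ _ _),
        show ((G.toMultigraph.graphOf A₂).Reachable w G.t) = EqvGen rG w G.t from
          propext (reachable_iff _ _ _ _)]
  have c2 : (∀ x y : H.V, EqvGen rH x y) ↔ ((H.delete e).graphOf A₁).Connected := by
    rw [connected_iff' (H.delete e) A₁, and_iff_right (⟨u⟩ : Nonempty (H.delete e).V)]
    try exact Iff.rfl
  have c3 : (∀ w z : G.V, EqvGen rG w z) ↔ (G.toMultigraph.graphOf A₂).Connected := by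
    rw [connected_iff', and_iff_right (⟨G.s⟩ : Nonempty G.toMultigraph.V)]
    try exact Iff.rfl
  have c4 : (∀ x y : H.V, EqvGen (fun x y => rH x y ∨ pairRel u v x y) x y)
      ↔ ((H.contract e).graphOf A₁).Connected := by
    rw [connected_iff' (H.contract e) A₁,
      and_iff_right (⟨Quot.mk _ u⟩ : Nonempty (H.contract e).V),
      ← H.contract_eqvGen_iff e A₁]
    refine forall_congr' fun x => forall_congr' fun y => (eqvGen_congr fun x y => ?_).symm
    constructor
    · rintro ⟨e0, he0, h⟩
      rcases Finset.mem_insert.mp he0 with rfl | hmem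
      · right
        rw [hends] at h
        rcases Sym2.eq_iff.mp h with ⟨h1, h2⟩ | ⟨h1, h2⟩
        · exact Or.inl ⟨h1.symm, h2.symm⟩
        · exact Or.inr ⟨h2.symm, h1.symm⟩
      · obtain ⟨e1, he1, rfl⟩ := Finset.mem_map.mp hmem
        exact Or.inl ⟨e1, he1, h⟩
    · rintro (⟨e1, he1, h⟩ | (⟨rfl, rfl⟩ | ⟨rfl, rfl⟩))
      · exact ⟨e1.1, Finset.mem_insert_of_mem (Finset.mem_map_of_mem _ he1), h⟩
      · exact ⟨e, Finset.mem_insert_self _ _, hends⟩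
      · exact ⟨e, Finset.mem_insert_self _ _, by rw [hends]; exact Sym2.eq_swap⟩
  rw [c1, c2, c3, c4]

end Splice
section Assemble
open Relation Multigraph

theorem ite_split_helper {P Q R S : Prop} [Decidable ((P ∧ Q) ∨ (R ∧ S))] [Decidable P]
    [Decidable Q] [Decidable R] [Decidable S] (h : ¬((P ∧ Q) ∧ (R ∧ S))) (a b : ℂ) :
    (if (P ∧ Q) ∨ (R ∧ S) then a * b else 0)
      = (if P then a else 0) * (if Q then b else 0)
        + (if R then a else 0) * (if S then b else 0) := by
  by_cases hP : P <;> by_cases hQ : Q <;> by_cases hR : R <;> by_cases hS : S <;> simp_all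

theorem rel_substEdge (H : Multigraph) (e : H.E) (u v : H.V) (hends : H.ends e = s(u, v))
    (G : TTGraph) (p : ℂ) :
    (H.substEdge e u v G).rel p
      = G.split p * (H.delete e).rel p + G.rel p * (H.contract e).rel p := by
  classical
  set n₁ := Fintype.card {e' : H.E // e' ≠ e} with hn₁
  set n₂ := Fintype.card G.toMultigraph.E with hn₂
  have hN : Fintype.card (H.substEdge e u v G).E = n₁ + n₂ := by
    rw [show Fintype.card (H.substEdge e u v G).E
        = Fintype.card ({e' : H.E // e' ≠ e} ⊕ G.toMultigraph.E) from
      Fintype.card_congr (Equiv.refl _), Fintype.card_sum]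
  have hn₁' : Fintype.card (H.delete e).E = n₁ := Fintype.card_congr (Equiv.refl _)
  have hn₁'' : Fintype.card (H.contract e).E = n₁ := Fintype.card_congr (Equiv.refl _)
  have hd : (H.delete e).rel p = ∑ B : Finset {e' : H.E // e' ≠ e},
      (if ((H.delete e).graphOf B).Connected then
        (1 - p) ^ B.card * p ^ (n₁ - B.card) else 0) :=
    Fintype.sum_equiv (Equiv.refl _) _ _ (fun B => by rw [hn₁', Equiv.refl_apply]; rfl)
  have hc : (H.contract e).rel p = ∑ B : Finset {e' : H.E // e' ≠ e},
      (if ((H.contract e).graphOf B).Connected then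
        (1 - p) ^ B.card * p ^ (n₁ - B.card) else 0) :=
    Fintype.sum_equiv (Equiv.refl _) _ _ (fun B => by rw [hn₁'', Equiv.refl_apply]; rfl)
  have hs : G.split p = ∑ C : Finset G.toMultigraph.E,
      (if G.IsSplit C then (1 - p) ^ C.card * p ^ (n₂ - C.card) else 0) := rfl
  have hg : G.rel p = ∑ C : Finset G.toMultigraph.E,
      (if (G.toMultigraph.graphOf C).Connected then
        (1 - p) ^ C.card * p ^ (n₂ - C.card) else 0) := rfl
  have lhs : (H.substEdge e u v G).rel p
      = ∑ B : Finset {e' : H.E // e' ≠ e}, ∑ C : Finset G.toMultigraph.E,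
          (if ((H.substEdge e u v G).graphOf (B.disjSum C)).Connected then
            (1 - p) ^ (B.disjSum C).card
              * p ^ (Fintype.card (H.substEdge e u v G).E - (B.disjSum C).card) else 0) :=
    sum_finset_sum_type _
  have rhs1 : G.split p * (H.delete e).rel p
      = ∑ B : Finset {e' : H.E // e' ≠ e}, ∑ C : Finset G.toMultigraph.E,
          (if G.IsSplit C then (1 - p) ^ C.card * p ^ (n₂ - C.card) else 0)
            * (if ((H.delete e).graphOf B).Connected then
                (1 - p) ^ B.card * p ^ (n₁ - B.card) else 0) := by
    rw [hs, hd, Finset.sum_mul_sum]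
    exact Finset.sum_comm
  have rhs2 : G.rel p * (H.contract e).rel p
      = ∑ B : Finset {e' : H.E // e' ≠ e}, ∑ C : Finset G.toMultigraph.E,
          (if (G.toMultigraph.graphOf C).Connected then
              (1 - p) ^ C.card * p ^ (n₂ - C.card) else 0)
            * (if ((H.contract e).graphOf B).Connected then
                (1 - p) ^ B.card * p ^ (n₁ - B.card) else 0) := by
    rw [hg, hc, Finset.sum_mul_sum]
    exact Finset.sum_comm
  rw [lhs, rhs1, rhs2, ← Finset.sum_add_distrib]
  refine Finset.sum_congr rfl fun B _ => ?_
  rw [← Finset.sum_add_distrib]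
  refine Finset.sum_congr rfl fun C _ => ?_
  have hBle : B.card ≤ n₁ := hn₁ ▸ Finset.card_le_univ B
  have hCle : C.card ≤ n₂ := hn₂ ▸ Finset.card_le_univ C
  have hexcl : ¬((G.IsSplit C ∧ ((H.delete e).graphOf B).Connected)
      ∧ ((G.toMultigraph.graphOf C).Connected ∧ ((H.contract e).graphOf B).Connected)) := by
    rintro ⟨⟨hs, -⟩, ⟨hg, -⟩⟩
    rcases hs G.s with ⟨-, h2⟩ | ⟨-, h2⟩
    · exact h2 (hg.preconnected G.s G.t)
    · exact h2 (SimpleGraph.Reachable.refl _)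
  have hM : (1 - p) ^ (B.disjSum C).card
        * p ^ (Fintype.card (H.substEdge e u v G).E - (B.disjSum C).card)
      = ((1 - p) ^ C.card * p ^ (n₂ - C.card)) * ((1 - p) ^ B.card * p ^ (n₁ - B.card)) := by
    rw [Finset.card_disjSum, hN,
      show n₁ + n₂ - (B.card + C.card) = (n₂ - C.card) + (n₁ - B.card) from by omega,
      show B.card + C.card = C.card + B.card from by omega, pow_add, pow_add]
    ring
  rw [substEdge_connected_iff H e u v hends G B C, hM]
  exact @ite_split_helper _ _ _ _ (Classical.propDecidable _) (Classical.propDecidable _)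
    (Classical.propDecidable _) (Classical.propDecidable _) (Classical.propDecidable _)
    hexcl _ _

end Assemble

/-- If `R(G;p) ≠ 0` then
`((1-p)/R(G;p))·R(H(G)_e;p) = R(H;p) + (y_G(p) − (p+1))·R(H∖e;p)`,
where `y_G(p) = (1-p)S(G;p)/R(G;p) + 1`. -/
theorem rel_substEdge_yEff (H : Multigraph) (e : H.E) (u v : H.V)
    (hends : H.ends e = s(u, v)) (G : TTGraph) (p : ℂ) (hR : G.rel p ≠ 0) :
    ((1 - p) / G.rel p) * (H.substEdge e u v G).rel p
      = H.rel p + (G.yEff p - (p + 1)) * (H.delete e).rel p := by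

  rw [rel_substEdge H e u v hends G p, H.rel_delcon e p]
  unfold TTGraph.yEff
  field_simp
  ring
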